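/- Let T be a nonempty string. If the longest palindromic prefix of T equals T itself (T is a palindrome) and T occurs exactly once in T (trivially true), then deleting the first character removes exactly the palindromes of DPal(T) that are unique in T and equal to lpp(T); in particular |DPal(T) \ DPal(T[1..|T|-1])| ≤ 1. -/
import Mathlib


def DPal {α : Type*} (T : List α) : Set (List α) :=
  {w | w ≠ [] ∧ w.reverse = w ∧ w <:+: T}

def occCount {α : Type*} [DecidableEq α] (S w : List α) : ℕ :=
  ((List.range (S.length + 1)).filter (fun i => decide (w <+: S.drop i))).length

def IsLpp {α : Type*} (T p : List α) : Prop :=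
  p <+: T ∧ p.reverse = p ∧ ∀ q, q <+: T → q.reverse = q → q.length ≤ p.length

lemma infix_drop_one' {α : Type*} {w T : List α} (h : w <:+: T) (hp : ¬ w <+: T) :
    w <:+: T.drop 1 := by
  obtain ⟨s, t, hst⟩ := h
  cases s with
  | nil => exact absurd ⟨t, by simpa using hst⟩ hp
  | cons a s' =>
      refine ⟨s', t, ?_⟩
      have := congrArg (List.drop 1) hst
      simpa using this

lemma suffix_drop_one' {α : Type*} {w T : List α} (h : w <:+ T) (hlt : w.length < T.length) :
    w <:+ T.drop 1 := by
  obtain ⟨s, hs⟩ := h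
  cases s with
  | nil => simp at hs; subst hs; exact absurd hlt (lt_irrefl _)
  | cons a s' =>
      refine ⟨s', ?_⟩
      have := congrArg (List.drop 1) hs
      simpa using this

lemma occCount_self' {α : Type*} [DecidableEq α] (T : List α) (hT : T ≠ []) :
    occCount T T = 1 := by
  have hn : 0 < T.length := List.length_pos_iff.mpr hT
  have : (List.range (T.length + 1)).filter (fun i => decide (T <+: T.drop i)) = [0] := by
    rw [List.range_succ_eq_map, List.filter_cons]
    rw [if_pos (by simp)]
    congr 1
    rw [List.filter_eq_nil_iff]
    intro a ha
    simp only [List.mem_map, List.mem_range] at ha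
    obtain ⟨j, hj, rfl⟩ := ha
    simp only [decide_eq_true_eq]
    intro hpre
    have := hpre.length_le
    rw [List.length_drop] at this
    omega
  unfold occCount
  rw [this]
  rfl

theorem deletion_removes_exactly_unique_lpp {α : Type*} [DecidableEq α]
    (T : List α) (hT : T ≠ []) (hpal : T.reverse = T) :
    (∀ w ∈ DPal T, (w ∉ DPal (T.drop 1) ↔ (occCount T w = 1 ∧ IsLpp T w))) ∧
    (DPal T \ DPal (T.drop 1)).Subsingleton := by
  have hn : 0 < T.length := List.length_pos_iff.mpr hT
  have hTnot : T ∉ DPal (T.drop 1) := by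
    rintro ⟨_, _, hinf⟩
    have := hinf.length_le
    rw [List.length_drop] at this
    omega
  have key : ∀ w ∈ DPal T, w ∉ DPal (T.drop 1) → w = T := by
    rintro w ⟨hne, hwpal, hinf⟩ hnot
    by_contra hwe
    by_cases hp : w <+: T
    · have hlt : w.length < T.length :=
        lt_of_le_of_ne hp.length_le (fun h => hwe (hp.eq_of_length h))
      have hsuf : w <:+ T := by
        rw [← hwpal, ← hpal]
        exact List.reverse_suffix.mpr hp
      exact hnot ⟨hne, hwpal, (suffix_drop_one' hsuf hlt).isInfix⟩
    · exact hnot ⟨hne, hwpal, infix_drop_one' hinf hp⟩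
  constructor
  · intro w hw
    constructor
    · intro hnot
      have hwT := key w hw hnot
      subst hwT
      exact ⟨occCount_self' w hT, List.prefix_refl w, hpal,
        fun q hq _ => hq.length_le⟩
    · rintro ⟨-, hlpp⟩
      have hwT : w = T := by
        have h1 := hlpp.2.2 T (List.prefix_refl T) hpal
        exact hlpp.1.eq_of_length (le_antisymm hlpp.1.length_le h1)
      subst hwT
      exact hTnot
  · intro x hx y hy
    rw [key x hx.1 hx.2, key y hy.1 hy.2]
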